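/- Let (X_1, X_2, X_3) have the following mixture law with c_2 = 6 + √3: with probability 1/c_2 for each j ∈ {1,2,3}, the vector is U e_j with U ~ Uniform(0,1]; with probability 1/c_2 for each pair 1 ≤ i < j ≤ 3, the vector is V (e_i + e_j) where V has density 2(1 − v) on (0,1]; and with probability √3/c_2, the vector is W (e_1 + e_2 + e_3) where W has distribution function G_2(z) = 1 − (1 − z)(1 − G_1(z)) on [0,1]. Then for every s ∈ (0,1), P(N_{s,3} = 1 | N_{s,3} ≥ 1) = 3/(√3 (1 − G_1(s)) + 3(1 − s) + 3), and hence lim_{s↑1} P(N_{s,3} = 1 | N_{s,3} ≥ 1) = 1; in particular FD_{3,1} exists and is degenerate at 1. -/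

import Mathlib

open MeasureTheory Filter Set Topology Classical

/-- Conditional probability `P(A | B)` as a real number. -/
noncomputable def condP {Ω : Type*} [MeasurableSpace Ω] (μ : Measure Ω) (A B : Set Ω) : ℝ :=
  (μ (A ∩ B)).toReal / (μ B).toReal

/-- The density `g₁` on `[0,1]`. -/
noncomputable def g1 (y : ℝ) : ℝ :=
  if ∃ k : ℕ, 1 - 1 / 2 ^ k ≤ y ∧ y ≤ 1 - 3 / 2 ^ (k + 2) then 2 else 0

/-- The distribution function of `g₁`. -/
noncomputable def G1 (y : ℝ) : ℝ := ∫ t in (0:ℝ)..y, g1 t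

/-- The distribution function `G₂(z) = 1 - (1-z)(1-G₁(z))` on `[0,1]`. -/
noncomputable def G2 (z : ℝ) : ℝ :=
  if z < 0 then 0 else if z ≤ 1 then 1 - (1 - z) * (1 - G1 z) else 1

/-- The uniform distribution on `(0,1]`. -/
noncomputable def unif : Measure ℝ := volume.restrict (Set.Ioc 0 1)

/-- The law with density `2(1-v)` on `(0,1]`. -/
noncomputable def nuV : Measure ℝ :=
  volume.withDensity fun v => ENNReal.ofReal (if v ∈ Set.Ioc (0:ℝ) 1 then 2 * (1 - v) else 0)

/-- The mixture law of `(X₁, X₂, X₃)` with `c₂ = 6 + √3`: the three axes carry the uniform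
law, the three diagonal pairs carry the law `nuV`, and the main diagonal carries the law `νW`
whose distribution function is `G₂`. -/
noncomputable def law3 (nuW : Measure ℝ) : Measure (ℝ × ℝ × ℝ) :=
  ENNReal.ofReal (1 / (6 + Real.sqrt 3)) •
    (Measure.map (fun u => (u, (0:ℝ), (0:ℝ))) unif +
     Measure.map (fun u => ((0:ℝ), u, (0:ℝ))) unif +
     Measure.map (fun u => ((0:ℝ), (0:ℝ), u)) unif) +
  ENNReal.ofReal (1 / (6 + Real.sqrt 3)) •
    (Measure.map (fun v => (v, v, (0:ℝ))) nuV +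
     Measure.map (fun v => ((0:ℝ), v, v)) nuV +
     Measure.map (fun v => (v, (0:ℝ), v)) nuV) +
  ENNReal.ofReal (Real.sqrt 3 / (6 + Real.sqrt 3)) •
    Measure.map (fun w => (w, w, w)) nuW

lemma g1_nonneg (y : ℝ) : 0 ≤ g1 y := by unfold g1; split <;> norm_num

lemma g1_le (y : ℝ) : g1 y ≤ 2 := by unfold g1; split <;> norm_num

lemma measurable_g1 : Measurable g1 := by
  have : g1 = (⋃ k : ℕ, Icc (1 - 1 / 2 ^ k) (1 - 3 / 2 ^ (k + 2) : ℝ)).indicator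
      (fun _ => (2:ℝ)) := by
    ext y
    simp only [g1, indicator, mem_iUnion, mem_Icc]
  rw [this]
  exact (measurable_const).indicator (MeasurableSet.iUnion fun k => measurableSet_Icc)

lemma g1_intInt (a b : ℝ) : IntervalIntegrable g1 volume a b := by
  refine (intervalIntegrable_const (c := (2:ℝ))).mono_fun' measurable_g1.aestronglyMeasurable ?_
  filter_upwards with x
  simpa [Real.norm_eq_abs, abs_of_nonneg (g1_nonneg x)] using g1_le x

lemma G1_mono : Monotone G1 := by
  intro a b hab
  have : G1 b = G1 a + ∫ t in a..b, g1 t := by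
    rw [G1, G1, intervalIntegral.integral_add_adjacent_intervals (g1_intInt 0 a) (g1_intInt a b)]
  rw [this]
  have : 0 ≤ ∫ t in a..b, g1 t :=
    intervalIntegral.integral_nonneg hab fun x _ => g1_nonneg x
  linarith

lemma G1_val (k : ℕ) : G1 (1 - 1 / 2 ^ k) = 1 - 1 / 2 ^ k := by
  induction k with
  | zero => simp [G1]
  | succ k ih =>
    have h2k : (0:ℝ) < 2 ^ k := by positivity
    set a : ℝ := 1 - 1 / 2 ^ k with ha
    set m : ℝ := 1 - 3 / 2 ^ (k + 2) with hm
    set b : ℝ := 1 - 1 / 2 ^ (k + 1) with hb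
    have ham : a ≤ m := by
      rw [ha, hm]
      have : (3:ℝ) / 2 ^ (k+2) ≤ 1 / 2^k := by
        rw [div_le_div_iff₀ (by positivity) (by positivity)]
        ring_nf
        nlinarith
      linarith
    have hmb : m ≤ b := by
      rw [hm, hb]
      have e : (2:ℝ)^(k+2) = 2 * 2^(k+1) := by ring
      have : (1:ℝ) / 2 ^ (k+1) ≤ 3 / 2^(k+2) := by
        rw [div_le_div_iff₀ (by positivity) (by positivity), e]
        nlinarith [pow_pos (show (0:ℝ)<2 by norm_num) (k+1)]
      linarith
    have key1 : (∫ t in a..m, g1 t) = 2 * (m - a) := by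
      rw [intervalIntegral.integral_of_le ham]
      rw [setIntegral_congr_fun measurableSet_Ioc (g := fun _ => (2:ℝ))
        (fun y hy => by
          unfold g1
          rw [if_pos ⟨k, le_of_lt hy.1, hy.2⟩])]
      simp [Real.volume_Ioc, ENNReal.toReal_ofReal (by linarith : (0:ℝ) ≤ m - a)]
      rw [max_eq_left (by linarith : (0:ℝ) ≤ m - a)]
      ring
    have key2 : (∫ t in m..b, g1 t) = 0 := by
      rw [intervalIntegral.integral_of_le hmb]
      have hae : ∀ᵐ y ∂(volume.restrict (Ioc m b)), g1 y = 0 := by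
        have hb' : ∀ᵐ y : ℝ ∂(volume.restrict (Ioc m b)), y ≠ b := by
          refine ae_iff.mpr ?_
          have : {y : ℝ | ¬ y ≠ b} = {b} := by ext y; simp
          rw [this, Measure.restrict_apply (measurableSet_singleton b)]
          exact measure_mono_null Set.inter_subset_left (Real.volume_singleton)
        have hmem : ∀ᵐ y ∂(volume.restrict (Ioc m b)), y ∈ Ioc m b :=
          ae_restrict_mem measurableSet_Ioc
        filter_upwards [hb', hmem] with y hyb hy
        unfold g1
        rw [if_neg]
        rintro ⟨j, hj1, hj2⟩
        have hy1 : 1 - y < 3 / 2 ^ (k + 2) := by rw [hm] at hy; linarith [hy.1]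
        have hy2 : 1 / 2 ^ (k + 1) < 1 - y := by
          rcases lt_or_eq_of_le hy.2 with h | h
          · rw [hb] at h; linarith
          · exact absurd h hyb
        have hj1' : 1 - y ≤ 1 / 2 ^ j := by linarith
        have hj2' : (3:ℝ) / 2 ^ (j + 2) ≤ 1 - y := by linarith
        -- 1/2^{k+1} < 1/2^j  ⇒  j < k+1  ⇒  j ≤ k
        have hjk : j ≤ k := by
          have h1 : (1:ℝ) / 2 ^ (k+1) < 1 / 2 ^ j := lt_of_lt_of_le hy2 hj1'
          have h2 : (2:ℝ) ^ j < 2 ^ (k+1) := by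
            have := (div_lt_div_iff₀ (by positivity) (by positivity)).mp h1
            linarith
          have := (pow_lt_pow_iff_right₀ (show (1:ℝ) < 2 by norm_num)).mp h2
          omega
        have : (3:ℝ) / 2 ^ (k + 2) ≤ 3 / 2 ^ (j + 2) := by
          apply div_le_div_of_nonneg_left (by norm_num) (by positivity)
          exact pow_le_pow_right₀ (by norm_num) (by omega)
        linarith
      rw [integral_congr_ae (show g1 =ᵐ[volume.restrict (Ioc m b)] (fun _ => (0:ℝ)) from hae)]
      simp
    have : G1 b = G1 a + ((∫ t in a..m, g1 t) + ∫ t in m..b, g1 t) := by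
      rw [intervalIntegral.integral_add_adjacent_intervals (g1_intInt a m) (g1_intInt m b),
        G1, G1, intervalIntegral.integral_add_adjacent_intervals (g1_intInt 0 a) (g1_intInt a b)]
    rw [this, key1, key2, ih]
    have e1 : (2:ℝ)^(k+1) = 2*2^k := by ring
    have e2 : (2:ℝ)^(k+2) = 4*2^k := by ring
    rw [ha, hm, hb, e1, e2]
    field_simp
    ring

lemma G1_zero : G1 0 = 0 := by simp [G1]

lemma G1_nonneg {s : ℝ} (hs : 0 ≤ s) : 0 ≤ G1 s := G1_zero ▸ G1_mono hs

lemma G1_le_one {s : ℝ} (h : s < 1) : G1 s ≤ 1 := by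
  · obtain ⟨k, hk⟩ : ∃ k : ℕ, (1:ℝ) / 2 ^ k ≤ 1 - s := by
      obtain ⟨k, hk⟩ := exists_pow_lt_of_lt_one (by linarith : (0:ℝ) < 1 - s)
        (by norm_num : (1:ℝ)/2 < 1)
      exact ⟨k, by rw [← one_div_pow] ; exact le_of_lt hk⟩
    calc G1 s ≤ G1 (1 - 1/2^k) := G1_mono (by linarith)
    _ = 1 - 1/2^k := G1_val k
    _ ≤ 1 := by
      have : (0:ℝ) < 1/2^k := by positivity
      linarith

lemma tendsto_G1 : Tendsto G1 (𝓝[<] (1:ℝ)) (𝓝 1) := by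
  rw [Metric.tendsto_nhdsWithin_nhds]
  intro ε hε
  obtain ⟨k, hk⟩ := exists_pow_lt_of_lt_one hε (by norm_num : (1:ℝ)/2 < 1)
  rw [one_div_pow] at hk
  refine ⟨1/2^k, by positivity, fun {s} hs hd => ?_⟩
  rw [Real.dist_eq] at hd ⊢
  rw [mem_Iio] at hs
  have hlb : 1 - 1/2^k ≤ s := by
    rw [abs_of_nonpos (by linarith)] at hd
    linarith
  have h1 : 1 - 1/2^k ≤ G1 s := (G1_val k) ▸ G1_mono hlb
  have h2 : G1 s ≤ 1 := G1_le_one hs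
  rw [abs_of_nonpos (by linarith)]
  linarith

lemma unif_Ioi {s : ℝ} (h0 : 0 < s) (h1 : s < 1) :
    unif (Ioi s) = ENNReal.ofReal (1 - s) := by
  rw [unif, Measure.restrict_apply measurableSet_Ioi]
  have : Ioi s ∩ Ioc 0 1 = Ioc s 1 := by
    ext x
    simp only [mem_inter_iff, mem_Ioi, mem_Ioc]
    constructor
    · rintro ⟨hx, _, hx2⟩; exact ⟨hx, hx2⟩
    · rintro ⟨hx1, hx2⟩; exact ⟨hx1, lt_trans h0 hx1, hx2⟩
  rw [this, Real.volume_Ioc]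

lemma nuV_Ioi {s : ℝ} (h0 : 0 < s) (h1 : s < 1) :
    nuV (Ioi s) = ENNReal.ofReal ((1 - s) ^ 2) := by
  have hfi : ∀ v : ℝ, (if v ∈ Set.Ioc (0:ℝ) 1 then 2 * (1 - v) else 0)
      = (Set.Ioc (0:ℝ) 1).indicator (fun v => 2 * (1 - v)) v := by
    intro v; simp [Set.indicator]
  rw [nuV, withDensity_apply _ measurableSet_Ioi]
  simp only [hfi]
  have hint : Integrable ((Set.Ioc (0:ℝ) 1).indicator (fun v => 2 * (1 - v)))
      (volume.restrict (Ioi s)) := by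
    refine Integrable.integrableOn ?_
    rw [integrable_indicator_iff measurableSet_Ioc]
    exact (Continuous.integrableOn_Ioc (by continuity))
  have hnn : 0 ≤ᵐ[volume.restrict (Ioi s)]
      ((Set.Ioc (0:ℝ) 1).indicator (fun v => 2 * (1 - v))) := by
    filter_upwards with v
    apply Set.indicator_nonneg
    intro x hx
    have := hx.2
    nlinarith
  rw [← ofReal_integral_eq_lintegral_ofReal hint hnn]
  congr 1
  rw [setIntegral_indicator measurableSet_Ioc]
  have : Ioi s ∩ Ioc 0 1 = Ioc s 1 := by
    ext x
    simp only [mem_inter_iff, mem_Ioi, mem_Ioc]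
    constructor
    · rintro ⟨hx, _, hx2⟩; exact ⟨hx, hx2⟩
    · rintro ⟨hx1, hx2⟩; exact ⟨hx1, lt_trans h0 hx1, hx2⟩
  rw [this, ← intervalIntegral.integral_of_le (le_of_lt h1)]
  have : (fun v : ℝ => 2 * (1 - v)) = fun v : ℝ => 2 - 2 * v := by ext v; ring
  rw [this]
  rw [intervalIntegral.integral_sub intervalIntegrable_const
    ((intervalIntegral.intervalIntegrable_id (μ := volume) (a := s) (b := 1)).const_mul 2), intervalIntegral.integral_const,
    intervalIntegral.integral_const_mul, integral_id, smul_eq_mul]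
  ring

lemma nuW_Ioi {nuW : Measure ℝ} [IsProbabilityMeasure nuW]
    (hW : ∀ z, nuW (Set.Iic z) = ENNReal.ofReal (G2 z)) {s : ℝ} (h0 : 0 < s) (h1 : s < 1) :
    nuW (Ioi s) = ENNReal.ofReal ((1 - s) * (1 - G1 s)) := by
  have hcompl : Ioi s = (Iic s)ᶜ := by simp
  rw [hcompl, measure_compl measurableSet_Iic (measure_ne_top _ _), measure_univ, hW]
  have hG2 : G2 s = 1 - (1 - s) * (1 - G1 s) := by
    rw [G2, if_neg (by linarith), if_pos (le_of_lt h1)]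
  have hg0 : 0 ≤ G1 s := G1_nonneg (le_of_lt h0)
  have hg1 : G1 s ≤ 1 := G1_le_one h1
  have h2nn : 0 ≤ G2 s := by rw [hG2]; nlinarith
  rw [show ((1:ENNReal) = ENNReal.ofReal 1) from (ENNReal.ofReal_one).symm,
    ← ENNReal.ofReal_sub _ h2nn]
  congr 1
  rw [hG2]; ring

lemma law3_apply (nuW : Measure ℝ) {E : Set (ℝ × ℝ × ℝ)} (hE : MeasurableSet E) :
    law3 nuW E =
      ENNReal.ofReal (1 / (6 + Real.sqrt 3)) *
        (unif ((fun u => (u, (0:ℝ), (0:ℝ))) ⁻¹' E) +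
         unif ((fun u => ((0:ℝ), u, (0:ℝ))) ⁻¹' E) +
         unif ((fun u => ((0:ℝ), (0:ℝ), u)) ⁻¹' E)) +
      ENNReal.ofReal (1 / (6 + Real.sqrt 3)) *
        (nuV ((fun v => (v, v, (0:ℝ))) ⁻¹' E) +
         nuV ((fun v => ((0:ℝ), v, v)) ⁻¹' E) +
         nuV ((fun v => (v, (0:ℝ), v)) ⁻¹' E)) +
      ENNReal.ofReal (Real.sqrt 3 / (6 + Real.sqrt 3)) *
        nuW ((fun w => (w, w, w)) ⁻¹' E) := by
  have hm1 : Measurable fun u : ℝ => (u, (0:ℝ), (0:ℝ)) :=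
    measurable_id.prodMk measurable_const
  have hm2 : Measurable fun u : ℝ => ((0:ℝ), u, (0:ℝ)) :=
    measurable_const.prodMk (measurable_id.prodMk measurable_const)
  have hm3 : Measurable fun u : ℝ => ((0:ℝ), (0:ℝ), u) :=
    measurable_const.prodMk (measurable_const.prodMk measurable_id)
  have hp12 : Measurable fun v : ℝ => (v, v, (0:ℝ)) :=
    measurable_id.prodMk (measurable_id.prodMk measurable_const)
  have hp23 : Measurable fun v : ℝ => ((0:ℝ), v, v) :=
    measurable_const.prodMk (measurable_id.prodMk measurable_id)
  have hp13 : Measurable fun v : ℝ => (v, (0:ℝ), v) :=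
    measurable_id.prodMk (measurable_const.prodMk measurable_id)
  have hd : Measurable fun w : ℝ => (w, w, w) :=
    measurable_id.prodMk (measurable_id.prodMk measurable_id)
  rw [law3]
  simp only [Measure.add_apply, Measure.smul_apply, smul_eq_mul]
  rw [Measure.map_apply hm1 hE, Measure.map_apply hm2 hE, Measure.map_apply hm3 hE,
    Measure.map_apply hp12 hE, Measure.map_apply hp23 hE, Measure.map_apply hp13 hE,
    Measure.map_apply hd hE]

/-- Under the mixture law `law3 nuW`, where `nuW` has distribution function
`G₂`: for every `s ∈ (0,1)`,
`P(N_{s,3}=1 | N_{s,3}≥1) = 3/(√3(1-G₁(s)) + 3(1-s) + 3)`, and hence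
`lim_{s↑1} P(N_{s,3}=1 | N_{s,3}≥1) = 1`, i.e. `FD_{3,1}` exists and is degenerate at 1. -/
theorem stmt4 {Ω : Type*} [MeasurableSpace Ω] (μ : Measure Ω) [IsProbabilityMeasure μ]
    (nuW : Measure ℝ) [IsProbabilityMeasure nuW]
    (hW : ∀ z, nuW (Set.Iic z) = ENNReal.ofReal (G2 z))
    (X1 X2 X3 : Ω → ℝ) (h1 : Measurable X1) (h2 : Measurable X2) (h3 : Measurable X3)
    (hlaw : Measure.map (fun ω => (X1 ω, X2 ω, X3 ω)) μ = law3 nuW)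
    (N : ℝ → Ω → ℕ)
    (hN : ∀ s ω, N s ω = (if s < X1 ω then 1 else 0) + (if s < X2 ω then 1 else 0)
      + (if s < X3 ω then 1 else 0)) :
    (∀ s ∈ Set.Ioo (0:ℝ) 1,
      condP μ {ω | N s ω = 1} {ω | 1 ≤ N s ω} =
        3 / (Real.sqrt 3 * (1 - G1 s) + 3 * (1 - s) + 3)) ∧
    Tendsto (fun s => condP μ {ω | N s ω = 1} {ω | 1 ≤ N s ω}) (𝓝[<] (1:ℝ)) (𝓝 1) := by
  have hsq : (0:ℝ) ≤ Real.sqrt 3 := Real.sqrt_nonneg 3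
  have hc0 : (0:ℝ) < 6 + Real.sqrt 3 := by positivity
  have key : ∀ s ∈ Set.Ioo (0:ℝ) 1,
      condP μ {ω | N s ω = 1} {ω | 1 ≤ N s ω} =
        3 / (Real.sqrt 3 * (1 - G1 s) + 3 * (1 - s) + 3) := by
    rintro s ⟨hs0, hs1⟩
    set cnt : ℝ × ℝ × ℝ → ℕ := fun p =>
      (if s < p.1 then 1 else 0) + (if s < p.2.1 then 1 else 0) + (if s < p.2.2 then 1 else 0)
      with hcntdef
    have hcnt : Measurable cnt := by
      refine Measurable.add (Measurable.add ?_ ?_) ?_ <;>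
        exact Measurable.ite
          (measurableSet_lt measurable_const (by fun_prop)) measurable_const measurable_const
    set A : Set (ℝ × ℝ × ℝ) := cnt ⁻¹' {1} with hAdef
    set B : Set (ℝ × ℝ × ℝ) := cnt ⁻¹' (Set.Ici 1) with hBdef
    have hA : MeasurableSet A := hcnt (measurableSet_singleton 1)
    have hB : MeasurableSet B := hcnt measurableSet_Ici
    have hT : Measurable fun ω => (X1 ω, X2 ω, X3 ω) := h1.prodMk (h2.prodMk h3)
    have hsetA : {ω | N s ω = 1} = (fun ω => (X1 ω, X2 ω, X3 ω)) ⁻¹' A := by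
      ext ω; simp [hAdef, hcntdef, hN s ω]
    have hsetB : {ω | 1 ≤ N s ω} = (fun ω => (X1 ω, X2 ω, X3 ω)) ⁻¹' B := by
      ext ω; simp [hBdef, hcntdef, hN s ω]
    have hns0 : ¬ (s < 0) := by linarith
    -- preimages for A
    have pA1 : (fun u : ℝ => (u, (0:ℝ), (0:ℝ))) ⁻¹' A = Set.Ioi s := by
      ext u; by_cases h : s < u <;> simp [hAdef, hcntdef, hns0, h]
    have pA2 : (fun u : ℝ => ((0:ℝ), u, (0:ℝ))) ⁻¹' A = Set.Ioi s := by
      ext u; by_cases h : s < u <;> simp [hAdef, hcntdef, hns0, h]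
    have pA3 : (fun u : ℝ => ((0:ℝ), (0:ℝ), u)) ⁻¹' A = Set.Ioi s := by
      ext u; by_cases h : s < u <;> simp [hAdef, hcntdef, hns0, h]
    have qA1 : (fun v : ℝ => (v, v, (0:ℝ))) ⁻¹' A = ∅ := by
      ext v; by_cases h : s < v <;> simp [hAdef, hcntdef, hns0, h]
    have qA2 : (fun v : ℝ => ((0:ℝ), v, v)) ⁻¹' A = ∅ := by
      ext v; by_cases h : s < v <;> simp [hAdef, hcntdef, hns0, h]
    have qA3 : (fun v : ℝ => (v, (0:ℝ), v)) ⁻¹' A = ∅ := by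
      ext v; by_cases h : s < v <;> simp [hAdef, hcntdef, hns0, h]
    have rA : (fun w : ℝ => (w, w, w)) ⁻¹' A = ∅ := by
      ext w; by_cases h : s < w <;> simp [hAdef, hcntdef, hns0, h]
    -- preimages for B
    have pB1 : (fun u : ℝ => (u, (0:ℝ), (0:ℝ))) ⁻¹' B = Set.Ioi s := by
      ext u; by_cases h : s < u <;> simp [hBdef, hcntdef, hns0, h]
    have pB2 : (fun u : ℝ => ((0:ℝ), u, (0:ℝ))) ⁻¹' B = Set.Ioi s := by
      ext u; by_cases h : s < u <;> simp [hBdef, hcntdef, hns0, h]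
    have pB3 : (fun u : ℝ => ((0:ℝ), (0:ℝ), u)) ⁻¹' B = Set.Ioi s := by
      ext u; by_cases h : s < u <;> simp [hBdef, hcntdef, hns0, h]
    have qB1 : (fun v : ℝ => (v, v, (0:ℝ))) ⁻¹' B = Set.Ioi s := by
      ext v; by_cases h : s < v <;> simp [hBdef, hcntdef, hns0, h]
    have qB2 : (fun v : ℝ => ((0:ℝ), v, v)) ⁻¹' B = Set.Ioi s := by
      ext v; by_cases h : s < v <;> simp [hBdef, hcntdef, hns0, h]
    have qB3 : (fun v : ℝ => (v, (0:ℝ), v)) ⁻¹' B = Set.Ioi s := by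
      ext v; by_cases h : s < v <;> simp [hBdef, hcntdef, hns0, h]
    have rB : (fun w : ℝ => (w, w, w)) ⁻¹' B = Set.Ioi s := by
      ext w; by_cases h : s < w <;> simp [hBdef, hcntdef, hns0, h]
    have hmuA : μ ((fun ω => (X1 ω, X2 ω, X3 ω)) ⁻¹' A) =
        ENNReal.ofReal ((3 * (1 - s)) * (1 / (6 + Real.sqrt 3))) := by
      have hr : (0:ℝ) ≤ 1 - s := by linarith
      have hinv : (0:ℝ) ≤ 1 / (6 + Real.sqrt 3) := by positivity
      rw [← Measure.map_apply hT hA, hlaw, law3_apply nuW hA, pA1, pA2, pA3, qA1, qA2, qA3, rA,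
        unif_Ioi hs0 hs1]
      simp only [measure_empty, add_zero, mul_zero, zero_add]
      rw [← ENNReal.ofReal_add hr hr, ← ENNReal.ofReal_add (by linarith) hr,
        ← ENNReal.ofReal_mul hinv]
      congr 1
      ring
    have hG1nn : 0 ≤ G1 s := G1_nonneg (le_of_lt hs0)
    have hG1le : G1 s ≤ 1 := G1_le_one hs1
    have hmuB : μ ((fun ω => (X1 ω, X2 ω, X3 ω)) ⁻¹' B) =
        ENNReal.ofReal (((3 * (1 - s) + 3 * (1 - s) ^ 2) +
          Real.sqrt 3 * ((1 - s) * (1 - G1 s))) * (1 / (6 + Real.sqrt 3))) := by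
      have hr : (0:ℝ) ≤ 1 - s := by linarith
      have hr2 : (0:ℝ) ≤ (1 - s) ^ 2 := by positivity
      have hrg : (0:ℝ) ≤ (1 - s) * (1 - G1 s) := mul_nonneg hr (by linarith)
      have hinv : (0:ℝ) ≤ 1 / (6 + Real.sqrt 3) := by positivity
      have hinv2 : (0:ℝ) ≤ Real.sqrt 3 / (6 + Real.sqrt 3) := by positivity
      rw [← Measure.map_apply hT hB, hlaw, law3_apply nuW hB, pB1, pB2, pB3, qB1, qB2, qB3, rB,
        unif_Ioi hs0 hs1, nuV_Ioi hs0 hs1, nuW_Ioi hW hs0 hs1]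
      rw [← ENNReal.ofReal_add hr hr, ← ENNReal.ofReal_add (by linarith) hr,
        ← ENNReal.ofReal_add hr2 hr2, ← ENNReal.ofReal_add (by linarith) hr2,
        ← ENNReal.ofReal_mul hinv, ← ENNReal.ofReal_mul hinv, ← ENNReal.ofReal_mul hinv2,
        ← ENNReal.ofReal_add (by positivity) (by positivity),
        ← ENNReal.ofReal_add (by positivity) (by positivity)]
      congr 1
      ring
    have hAB : {ω | N s ω = 1} ∩ {ω | 1 ≤ N s ω} = {ω | N s ω = 1} := by
      apply Set.inter_eq_left.mpr
      intro ω hω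
      simp only [Set.mem_setOf_eq] at *
      omega
    have hG1nn' : 0 ≤ G1 s := hG1nn
    have hr : (0:ℝ) < 1 - s := by linarith
    have hg : (0:ℝ) ≤ 1 - G1 s := by linarith
    have hden : (0:ℝ) < Real.sqrt 3 * (1 - G1 s) + 3 * (1 - s) + 3 := by positivity
    unfold condP
    rw [hAB, hsetA, hsetB, hmuA, hmuB,
      ENNReal.toReal_ofReal (by positivity),
      ENNReal.toReal_ofReal (by positivity)]
    rw [div_eq_div_iff (by positivity) (by positivity)]
    field_simp
    ring
  refine ⟨key, ?_⟩
  have hfe : ∀ᶠ s in 𝓝[<] (1:ℝ),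
      condP μ {ω | N s ω = 1} {ω | 1 ≤ N s ω} =
        3 / (Real.sqrt 3 * (1 - G1 s) + 3 * (1 - s) + 3) := by
    filter_upwards [Ioo_mem_nhdsLT_of_mem (show (1:ℝ) ∈ Set.Ioc (0:ℝ) 1 by constructor <;> norm_num)]
      with s hs
    exact key s hs
  have hid : Tendsto (fun s : ℝ => s) (𝓝[<] (1:ℝ)) (𝓝 1) :=
    tendsto_id.mono_left nhdsWithin_le_nhds
  have hden : Tendsto (fun s => Real.sqrt 3 * (1 - G1 s) + 3 * (1 - s) + 3)
      (𝓝[<] (1:ℝ)) (𝓝 3) := by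
    have : Tendsto (fun s => Real.sqrt 3 * (1 - G1 s) + 3 * (1 - s) + 3)
        (𝓝[<] (1:ℝ)) (𝓝 (Real.sqrt 3 * (1 - 1) + 3 * (1 - 1) + 3)) := by
      exact (((tendsto_const_nhds.sub tendsto_G1).const_mul _).add
        ((tendsto_const_nhds.sub hid).const_mul _)).add tendsto_const_nhds
    simpa using this
  have hlim : Tendsto (fun s => 3 / (Real.sqrt 3 * (1 - G1 s) + 3 * (1 - s) + 3))
      (𝓝[<] (1:ℝ)) (𝓝 1) := by
    have := Tendsto.div (tendsto_const_nhds (x := (3:ℝ))) hden (by norm_num)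
    rw [div_self (by norm_num : (3:ℝ) ≠ 0)] at this
    exact this
  exact Tendsto.congr' (hfe.mono fun s h => h.symm) hlim
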